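/- Consider the $2N\times 2N$ block-diagonal matrix $A = \mathrm{diag}(A_1,\dots,A_N)$ with $A_j = \begin{pmatrix} 0 & 1 \\ -\lambda_j & 0\end{pmatrix}$, and the $(r+1)\times 2N$ output matrix $C$ with rows $(c_{s1}, 0, c_{s2}, 0, \dots, c_{sN}, 0)$ for $s=0,\dots,r$. If the $\lambda_1,\dots,\lambda_N$ are pairwise distinct and for each $j\in\{1,\dots,N\}$ there exists $s\in\{0,\dots,r\}$ with $c_{sj}\neq 0$, then the pair $(A,C)$ is observable, i.e., the observability matrix $(C; CA; \dots; CA^{2N-1})$ has rank $2N$. -/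
import Mathlib

def blockA (N : ℕ) (lam : Fin N → ℝ) : Matrix (Fin N × Fin 2) (Fin N × Fin 2) ℝ :=
  Matrix.of fun p q =>
    if p.1 = q.1 then
      if p.2 = 0 ∧ q.2 = 1 then 1
      else if p.2 = 1 ∧ q.2 = 0 then -lam p.1
      else 0
    else 0

lemma blockA_pow (N : ℕ) (lam : Fin N → ℝ) (n : ℕ) (p q : Fin N × Fin 2) :
    ((blockA N lam) ^ n) p q =
      if p.1 = q.1 ∧ ((p.2 : ℕ) + n) % 2 = (q.2 : ℕ) then (-lam p.1) ^ ((n + (p.2 : ℕ)) / 2)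
      else 0 := by
  induction n generalizing q with
  | zero =>
    simp only [pow_zero, Matrix.one_apply, add_zero, Nat.zero_add]
    rcases p with ⟨j, a⟩; rcases q with ⟨k, b⟩
    fin_cases a <;> fin_cases b <;> simp [Prod.ext_iff]
  | succ n ih =>
    rw [pow_succ, Matrix.mul_apply, Fintype.sum_prod_type]
    rw [Finset.sum_eq_single q.1]
    · rw [Fin.sum_univ_two]
      rcases p with ⟨j, a⟩; rcases q with ⟨k, b⟩
      simp only at *
      rw [ih (k, 0), ih (k, 1)]
      by_cases hjk : j = k
      · subst hjk
        fin_cases b <;>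
          simp only [blockA, Matrix.of_apply, if_pos rfl, true_and, Fin.isValue,
            Fin.val_zero, Fin.val_one] <;>
          rcases Nat.even_or_odd ((a : ℕ) + n) with h | h <;>
          [rw [Nat.even_iff] at h; rw [Nat.odd_iff] at h;
           rw [Nat.even_iff] at h; rw [Nat.odd_iff] at h] <;>
          [skip; skip; skip; skip]
        · have h2 : ((a : ℕ) + (n + 1)) % 2 = 1 := by omega
          simp [h, h2]
        · have h2 : ((a : ℕ) + (n + 1)) % 2 = 0 := by omega
          simp only [h, h2, if_pos rfl, if_neg (by omega : ¬(1 : ℕ) = 0)]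
          have he : (n + 1 + (a:ℕ)) / 2 = (n + (a:ℕ)) / 2 + 1 := by omega
          rw [he, pow_succ]; norm_num
        · have h2 : ((a : ℕ) + (n + 1)) % 2 = 1 := by omega
          simp only [h, h2, if_pos rfl, if_neg (by omega : ¬(0 : ℕ) = 1)]
          have he : (n + 1 + (a:ℕ)) / 2 = (n + (a:ℕ)) / 2 := by omega
          rw [he]; norm_num
        · have h2 : ((a : ℕ) + (n + 1)) % 2 = 0 := by omega
          simp [h, h2]
      · simp [hjk]
    · intro u _ hu
      rw [Fin.sum_univ_two]
      have h0 : blockA N lam (u, 0) q = 0 := by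
        simp [blockA, fun h => hu (h : u = q.1)]
      have h1 : blockA N lam (u, 1) q = 0 := by
        simp [blockA, fun h => hu (h : u = q.1)]
      rw [h0, h1]; ring
    · intro h; exact absurd (Finset.mem_univ q.1) h

def outC (N r : ℕ) (c : Fin (r + 1) → Fin N → ℝ) : Matrix (Fin (r + 1)) (Fin N × Fin 2) ℝ :=
  Matrix.of fun s q => if q.2 = 0 then c s q.1 else 0

def obsMat (N r : ℕ) (lam : Fin N → ℝ) (c : Fin (r + 1) → Fin N → ℝ) :
    Matrix (Fin (2 * N) × Fin (r + 1)) (Fin N × Fin 2) ℝ :=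
  Matrix.of fun ns q => (outC N r c * (blockA N lam) ^ (ns.1 : ℕ)) ns.2 q

lemma obsMat_apply (N r : ℕ) (lam : Fin N → ℝ) (c : Fin (r + 1) → Fin N → ℝ)
    (n : Fin (2 * N)) (s : Fin (r + 1)) (k : Fin N) (i : Fin 2) :
    obsMat N r lam c (n, s) (k, i) =
      if (n : ℕ) % 2 = (i : ℕ) then c s k * (-lam k) ^ ((n : ℕ) / 2) else 0 := by
  simp only [obsMat, Matrix.of_apply, Matrix.mul_apply, Fintype.sum_prod_type]
  rw [Finset.sum_eq_single k]
  · rw [Fin.sum_univ_two]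
    simp only [outC, Matrix.of_apply]
    rw [blockA_pow, blockA_pow]
    simp only [Fin.isValue, Fin.val_zero, Fin.val_one, Nat.zero_add, Nat.add_zero]
    norm_num
  · intro j _ hj
    rw [Fin.sum_univ_two]
    simp only [outC, Matrix.of_apply]
    rw [blockA_pow, blockA_pow]
    simp [hj]
  · intro h; exact absurd (Finset.mem_univ k) h

theorem stmt5 (N r : ℕ) (lam : Fin N → ℝ) (c : Fin (r + 1) → Fin N → ℝ)
    (hdist : Function.Injective lam)
    (hc : ∀ j : Fin N, ∃ s : Fin (r + 1), c s j ≠ 0) :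
    (obsMat N r lam c).rank = 2 * N := by
  classical
  set M := obsMat N r lam c with hM
  have hker : LinearMap.ker M.mulVecLin = ⊥ := by
    rw [LinearMap.ker_eq_bot']
    intro x hx
    have key : ∀ (s : Fin (r + 1)) (i : Fin 2) (k : Fin N), c s k * x (k, i) = 0 := by
      intro s i
      have hvdm : ∀ m : Fin N,
          (∑ k : Fin N, (c s k * x (k, i)) * (-lam k) ^ (m : ℕ)) = 0 := by
        intro m
        have hn : 2 * (m : ℕ) + (i : ℕ) < 2 * N := by
          have := m.2; have := i.2; omega
        have hrow := congrFun hx (⟨2 * (m : ℕ) + (i : ℕ), hn⟩, s)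
        rw [Matrix.mulVecLin_apply] at hrow
        simp only [Matrix.mulVec, dotProduct, Pi.zero_apply] at hrow
        rw [Fintype.sum_prod_type] at hrow
        have hsum : ∀ k : Fin N,
            (∑ b : Fin 2, M ((⟨2 * (m : ℕ) + (i : ℕ), hn⟩ : Fin (2 * N)), s) (k, b) * x (k, b))
              = (c s k * x (k, i)) * (-lam k) ^ (m : ℕ) := by
          intro k
          rw [Fin.sum_univ_two, hM, obsMat_apply, obsMat_apply]
          have hmod : (2 * (m : ℕ) + (i : ℕ)) % 2 = (i : ℕ) := by
            have := i.2; omega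
          have hdiv : (2 * (m : ℕ) + (i : ℕ)) / 2 = (m : ℕ) := by
            have := i.2; omega
          fin_cases i <;> simp_all <;> ring
        rw [Finset.sum_congr rfl (fun k _ => hsum k)] at hrow
        exact hrow
      have hneg : Function.Injective (fun k => -lam k) := by
        intro a b hab
        exact hdist (neg_injective hab)
      have := Matrix.eq_zero_of_forall_pow_sum_mul_pow_eq_zero hneg hvdm
      exact fun k => congrFun this k
    funext q
    rcases q with ⟨k, i⟩
    obtain ⟨s, hs⟩ := hc k
    have hz := key s i k
    rcases mul_eq_zero.mp hz with h | h
    · exact absurd h hs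
    · exact h
  have hrn := LinearMap.finrank_range_add_finrank_ker M.mulVecLin
  rw [hker, finrank_bot] at hrn
  have hdom : Module.finrank ℝ ((Fin N × Fin 2) → ℝ) = 2 * N := by
    simp [Module.finrank_pi, Fintype.card_prod, mul_comm]
  rw [Matrix.rank]
  omega
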